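/- For every integer n ≥ 9, Left wins the Mutual Failures Variant of the Mixed Deletion Game on the path P_n regardless of which player moves first; i.e., P_n > 0 as a combinatorial game. -/

import Mathlib

universe u

namespace SetTheory

/-- Pre-game, as in the former `Mathlib.SetTheory.Game.PGame` (removed from Mathlib). -/
inductive PGame : Type (u + 1)
  | mk : ∀ α β : Type u, (α → PGame) → (β → PGame) → PGame

namespace PGame

/-- Inner recursion (on `y`) of the simultaneous definition of `≤` and `⧏`, given the
values `fL i = leLF (xL i)` and `fR j = leLF (xR j)` for the options of `x`. -/
def leLFAux {xl xr : Type u} (fL : xl → PGame.{u} → Prop × Prop)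
    (fR : xr → PGame.{u} → Prop × Prop) : PGame.{u} → Prop × Prop
  | mk yl yr yL yR =>
    ((∀ i, (fL i (mk yl yr yL yR)).2) ∧ ∀ j, (leLFAux fL fR (yR j)).2,
      (∃ i, (leLFAux fL fR (yL i)).1) ∨ ∃ j, (fR j (mk yl yr yL yR)).1)

/-- Simultaneous definition of `≤` and `⧏` (`.1` is `x ≤ y`, `.2` is `x ⧏ y`). -/
def leLF : PGame.{u} → PGame.{u} → Prop × Prop
  | mk _ _ xL xR => leLFAux (fun i => leLF (xL i)) (fun j => leLF (xR j))

instance : LE PGame.{u} := ⟨fun x y => (leLF x y).1⟩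

/-- The less or fuzzy relation. -/
def LF (x y : PGame.{u}) : Prop := ¬y ≤ x

infix:50 " ⧏ " => PGame.LF

instance : LT PGame.{u} := ⟨fun x y => x ≤ y ∧ x ⧏ y⟩

instance : Zero PGame.{u} := ⟨mk PEmpty PEmpty PEmpty.elim PEmpty.elim⟩

instance : One PGame.{u} := ⟨mk PUnit PEmpty (fun _ => 0) PEmpty.elim⟩

/-- Negation of a pre-game. -/
def neg : PGame.{u} → PGame.{u}
  | mk l r L R => mk r l (fun i => neg (R i)) (fun i => neg (L i))

instance : Neg PGame.{u} := ⟨neg⟩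

/-- Inner recursion (on `y`) of the sum, given `fL i = add (xL i)`, `fR j = add (xR j)`. -/
def addAux {xl xr : Type u} (fL : xl → PGame.{u} → PGame.{u})
    (fR : xr → PGame.{u} → PGame.{u}) : PGame.{u} → PGame.{u}
  | mk yl yr yL yR =>
    mk (xl ⊕ yl) (xr ⊕ yr)
      (Sum.rec (fun i => fL i (mk yl yr yL yR)) (fun i => addAux fL fR (yL i)))
      (Sum.rec (fun i => fR i (mk yl yr yL yR)) (fun i => addAux fL fR (yR i)))

/-- Sum of pre-games: `x + y = {xL + y, x + yL | xR + y, x + yR}`. -/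
def add : PGame.{u} → PGame.{u} → PGame.{u}
  | mk _ _ xL xR => addAux (fun i => add (xL i)) (fun j => add (xR j))

instance : Add PGame.{u} := ⟨add⟩

/-- The game `⋆ = {0 | 0}`. -/
def star : PGame.{u} := mk PUnit PUnit (fun _ => 0) (fun _ => 0)

/-- The nim game `*o`: either player may move to `*o'` for any `o' < o`. -/
noncomputable def nim (o : Ordinal.{u}) : PGame.{u} :=
  mk o.ToType o.ToType
    (fun x => nim (Ordinal.typein (α := o.ToType) (· < ·) x))
    (fun x => nim (Ordinal.typein (α := o.ToType) (· < ·) x))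
termination_by o
decreasing_by all_goals exact Ordinal.typein_lt_self x

end PGame

namespace PGame

def LeftMoves : PGame.{u} → Type u
  | mk l _ _ _ => l

def RightMoves : PGame.{u} → Type u
  | mk _ r _ _ => r

def moveLeft : (g : PGame.{u}) → LeftMoves g → PGame.{u}
  | mk _ _ L _ => L

def moveRight : (g : PGame.{u}) → RightMoves g → PGame.{u}
  | mk _ _ _ R => R

@[simp] theorem moveLeft_mk {xl xr : Type u} {xL : xl → PGame.{u}} {xR : xr → PGame.{u}} :
    (mk xl xr xL xR).moveLeft = xL := rfl

@[simp] theorem moveRight_mk {xl xr : Type u} {xL : xl → PGame.{u}} {xR : xr → PGame.{u}} :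
    (mk xl xr xL xR).moveRight = xR := rfl

theorem leLF_mk_mk {xl xr : Type u} (xL : xl → PGame.{u}) (xR : xr → PGame.{u})
    {yl yr : Type u} (yL : yl → PGame.{u}) (yR : yr → PGame.{u}) :
    leLF (mk xl xr xL xR) (mk yl yr yL yR) =
      ((∀ i, (leLF (xL i) (mk yl yr yL yR)).2) ∧ ∀ j, (leLF (mk xl xr xL xR) (yR j)).2,
        (∃ i, (leLF (mk xl xr xL xR) (yL i)).1) ∨ ∃ j, (leLF (xR j) (mk yl yr yL yR)).1) := rfl

theorem lf_iff_aux : ∀ x y : PGame.{u},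
    ((leLF x y).2 ↔ ¬(leLF y x).1) ∧ ((leLF y x).2 ↔ ¬(leLF x y).1) := by
  intro x
  induction x with
  | mk xl xr xL xR ihxL ihxR =>
    intro y
    induction y with
    | mk yl yr yL yR ihyL ihyR =>
      simp only [leLF_mk_mk]
      constructor
      · rw [not_and_or, not_forall, not_forall]
        refine or_congr (exists_congr fun i => ?_) (exists_congr fun j => ?_)
        · rw [(ihyL i).2, not_not]
        · rw [(ihxR j (mk yl yr yL yR)).2, not_not]
      · rw [not_and_or, not_forall, not_forall]
        refine or_congr (exists_congr fun i => ?_) (exists_congr fun j => ?_)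
        · rw [(ihxL i (mk yl yr yL yR)).1, not_not]
        · rw [(ihyR j).1, not_not]

theorem lf_iff_snd (x y : PGame.{u}) : x ⧏ y ↔ (leLF x y).2 := by
  rw [(lf_iff_aux x y).1]; rfl

theorem zero_le_lf {x : PGame.{u}} : 0 ≤ x ↔ ∀ j, 0 ⧏ x.moveRight j := by
  cases x with
  | mk xl xr xL xR =>
    show (leLF (mk PEmpty PEmpty PEmpty.elim PEmpty.elim) (mk xl xr xL xR)).1 ↔ _
    rw [leLF_mk_mk]
    exact ⟨fun h j => (lf_iff_snd 0 (xR j)).2 (h.2 j),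
      fun h => ⟨fun i => i.elim, fun j => (lf_iff_snd 0 (xR j)).1 (h j)⟩⟩

theorem zero_lf_le {x : PGame.{u}} : 0 ⧏ x ↔ ∃ i, 0 ≤ x.moveLeft i := by
  cases x with
  | mk xl xr xL xR =>
    rw [lf_iff_snd]
    show (leLF (mk PEmpty PEmpty PEmpty.elim PEmpty.elim) (mk xl xr xL xR)).2 ↔ _
    rw [leLF_mk_mk]
    exact ⟨fun h => h.elim id (fun ⟨j, _⟩ => j.elim), fun h => Or.inl h⟩

theorem lt_iff_le_and_lf {x y : PGame.{u}} : x < y ↔ x ≤ y ∧ x ⧏ y := Iff.rfl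

end PGame

end SetTheory


open SetTheory PGame

namespace MixedDeletion

/-- The degree of a vertex `v` with respect to an edge set `E`. -/
def deg (E : Finset (Sym2 ℕ)) (v : ℕ) : ℕ := (E.filter (fun e => v ∈ e)).card

/-- The graph position with vertex set `V` and edge set `E` has no isolated vertex. -/
def NoIsol (V : Finset ℕ) (E : Finset (Sym2 ℕ)) : Prop := ∀ v ∈ V, 0 < deg E v

/-- Result of Left deleting the vertex `v`: remove `v` and all incident edges. -/
def delV (V : Finset ℕ) (E : Finset (Sym2 ℕ)) (v : ℕ) : Finset ℕ × Finset (Sym2 ℕ) :=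
  (V.erase v, E.filter (fun e => v ∉ e))

/-- Left may legally delete vertex `v` under the base (Classic) rules:
`v` is a vertex and the deletion creates no isolated vertex. -/
def LeftOK (V : Finset ℕ) (E : Finset (Sym2 ℕ)) (v : ℕ) : Prop :=
  v ∈ V ∧ NoIsol (V.erase v) (E.filter (fun e => v ∉ e))

/-- Right may legally delete edge `e` under the base (Classic) rules:
`e` is an edge and the deletion creates no isolated vertex. -/
def RightOK (V : Finset ℕ) (E : Finset (Sym2 ℕ)) (e : Sym2 ℕ) : Prop :=
  e ∈ E ∧ NoIsol V (E.erase e)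

/-- The Classic Variant of the Mixed Deletion Game, as a partizan game:
Left deletes a vertex (and incident edges), Right deletes an edge,
and no move may create an isolated vertex. -/
def classicG : Finset ℕ → Finset (Sym2 ℕ) → PGame
  | V, E =>
    PGame.mk {v : ℕ // LeftOK V E v} {e : Sym2 ℕ // RightOK V E e}
      (fun x => classicG (V.erase x.val) (E.filter (fun e => x.val ∉ e)))
      (fun x => classicG V (E.erase x.val))
  termination_by V E => V.card + E.card
  decreasing_by
  · have h1 : (V.erase x.val).card < V.card := Finset.card_erase_lt_of_mem x.2.1
    have h2 : (E.filter (fun e => x.val ∉ e)).card ≤ E.card := Finset.card_filter_le _ _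
    omega
  · have h1 : (E.erase x.val).card < E.card := Finset.card_erase_lt_of_mem x.2.1
    omega

/-- The Forbidden Leaf Variant: as the Classic Variant, but Left may not
delete leaf vertices (vertices of degree one). -/
def flG : Finset ℕ → Finset (Sym2 ℕ) → PGame
  | V, E =>
    PGame.mk {v : ℕ // LeftOK V E v ∧ deg E v ≠ 1} {e : Sym2 ℕ // RightOK V E e}
      (fun x => flG (V.erase x.val) (E.filter (fun e => x.val ∉ e)))
      (fun x => flG V (E.erase x.val))
  termination_by V E => V.card + E.card
  decreasing_by
  · have h1 : (V.erase x.val).card < V.card := Finset.card_erase_lt_of_mem x.2.1.1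
    have h2 : (E.filter (fun e => x.val ∉ e)).card ≤ E.card := Finset.card_filter_le _ _
    omega
  · have h1 : (E.erase x.val).card < E.card := Finset.card_erase_lt_of_mem x.2.1
    omega

/-- The Mutual Failures Variant: as the Classic Variant, but in any graph
position a player has a legal move if and only if the opponent does; i.e. a
base-rules move is legal only if the opponent also has a base-rules move. -/
def mfG : Finset ℕ → Finset (Sym2 ℕ) → PGame
  | V, E =>
    PGame.mk {v : ℕ // LeftOK V E v ∧ ∃ e, RightOK V E e}
      {e : Sym2 ℕ // RightOK V E e ∧ ∃ v, LeftOK V E v}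
      (fun x => mfG (V.erase x.val) (E.filter (fun e => x.val ∉ e)))
      (fun x => mfG V (E.erase x.val))
  termination_by V E => V.card + E.card
  decreasing_by
  · have h1 : (V.erase x.val).card < V.card := Finset.card_erase_lt_of_mem x.2.1.1
    have h2 : (E.filter (fun e => x.val ∉ e)).card ≤ E.card := Finset.card_filter_le _ _
    omega
  · have h1 : (E.erase x.val).card < E.card := Finset.card_erase_lt_of_mem x.2.1.1
    omega

/-- Edge set of the path graph on vertices `0, 1, …, n-1`. -/
def pathE (n : ℕ) : Finset (Sym2 ℕ) := (Finset.range (n - 1)).image (fun i => s(i, i + 1))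

/-- Edge set of the cycle graph on vertices `0, 1, …, n-1`. -/
def cycleE (n : ℕ) : Finset (Sym2 ℕ) := (Finset.range n).image (fun i => s(i, (i + 1) % n))

/-- Edge set of the complete graph on vertices `0, 1, …, n-1`. -/
def completeE (n : ℕ) : Finset (Sym2 ℕ) := (Finset.range n).sym2.filter (fun e => ¬ e.IsDiag)

/-- The path position `P_n` in the Classic Variant. -/
def classicPath (n : ℕ) : PGame := classicG (Finset.range n) (pathE n)

/-- The cycle position `C_n` in the Classic Variant. -/
def classicCycle (n : ℕ) : PGame := classicG (Finset.range n) (cycleE n)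

/-- The complete graph position `K_n` in the Classic Variant. -/
def classicComplete (n : ℕ) : PGame := classicG (Finset.range n) (completeE n)

/-- The path position `P_n` in the Forbidden Leaf Variant. -/
def flPath (n : ℕ) : PGame := flG (Finset.range n) (pathE n)

/-- The cycle position `C_n` in the Forbidden Leaf Variant. -/
def flCycle (n : ℕ) : PGame := flG (Finset.range n) (cycleE n)

/-- The complete graph position `K_n` in the Forbidden Leaf Variant. -/
def flComplete (n : ℕ) : PGame := flG (Finset.range n) (completeE n)

/-- The path position `P_n` in the Mutual Failures Variant. -/
def mfPath (n : ℕ) : PGame := mfG (Finset.range n) (pathE n)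

/-- The cycle position `C_n` in the Mutual Failures Variant. -/
def mfCycle (n : ℕ) : PGame := mfG (Finset.range n) (cycleE n)

/-- The complete graph position `K_n` in the Mutual Failures Variant. -/
def mfComplete (n : ℕ) : PGame := mfG (Finset.range n) (completeE n)

/-- The partizan game equal to a natural number `n`. -/
def natPG : ℕ → PGame
  | 0 => 0
  | n + 1 => natPG n + 1

/-- The partizan game equal to an integer `z`. -/
def intPG (z : ℤ) : PGame := if 0 ≤ z then natPG z.toNat else -natPG (-z).toNat

/-- The game up, `↑ = {0 | *}`. -/
def up : PGame := PGame.mk PUnit PUnit (fun _ => 0) (fun _ => star)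

/-- The game down, `↓ = {* | 0}`. -/
def down : PGame := -up

/-- The sum of `n` copies of up. -/
def natUp : ℕ → PGame
  | 0 => 0
  | n + 1 => natUp n + up

/-- The game `z·↑`: `|z|` copies of up if `z ≥ 0`, and `|z|` copies of down otherwise. -/
def zUp (z : ℤ) : PGame := if 0 ≤ z then natUp z.toNat else -natUp (-z).toNat

/-- Two games have the same outcome: Left wins moving first in one iff in the other,
and Right wins moving first in one iff in the other. -/
def SameOutcome (A B : PGame) : Prop := (0 ⧏ A ↔ 0 ⧏ B) ∧ (A ⧏ 0 ↔ B ⧏ 0)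

/-- Far-star equivalence: `G + X + ✶` and `H + X + ✶` have the same outcome for
every game `X`, where `✶` (far star) is any nim-heap `*k` with `k ≥ 2`. -/
def FarStarEquiv (G H : PGame) : Prop :=
  ∀ (X : PGame) (k : ℕ), 2 ≤ k → SameOutcome (G + X + nim k) (H + X + nim k)

/-- `G` has atomic weight `z` if `G` is far-star equivalent to `z·↑`. -/
def AtomicWeight (G : PGame) (z : ℤ) : Prop := FarStarEquiv G (zUp z)

/-- A game is all-small if in every subposition Left has a move iff Right has a move. -/
def AllSmall : PGame → Prop
  | PGame.mk l r L R =>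
    (Nonempty l ↔ Nonempty r) ∧ (∀ i, AllSmall (L i)) ∧ (∀ j, AllSmall (R j))

abbrev Seg := ℕ × ℕ
def segV (s : Seg) : Finset ℕ := Finset.Ico s.1 (s.1 + s.2)
def segE (s : Seg) : Finset (Sym2 ℕ) := (Finset.Ico s.1 (s.1 + s.2 - 1)).image (fun i => s(i, i+1))
def listV : List Seg → Finset ℕ
  | [] => ∅
  | s :: R => segV s ∪ listV R
def listE : List Seg → Finset (Sym2 ℕ)
  | [] => ∅
  | s :: R => segE s ∪ listE R
def Sep (L : List Seg) : Prop :=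
  (∀ s ∈ L, 2 ≤ s.2) ∧ L.Pairwise (fun s t => Disjoint (segV s) (segV t))

lemma mem_segV {s : Seg} {v : ℕ} : v ∈ segV s ↔ s.1 ≤ v ∧ v < s.1 + s.2 := Finset.mem_Ico

lemma mem_segE {s : Seg} {e : Sym2 ℕ} :
    e ∈ segE s ↔ ∃ i, (s.1 ≤ i ∧ i + 1 < s.1 + s.2) ∧ e = s(i, i+1) := by
  simp only [segE, Finset.mem_image, Finset.mem_Ico]
  constructor
  · rintro ⟨i, ⟨h1, h2⟩, rfl⟩; exact ⟨i, ⟨h1, by omega⟩, rfl⟩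
  · rintro ⟨i, ⟨h1, h2⟩, rfl⟩; exact ⟨i, ⟨h1, by omega⟩, rfl⟩

lemma mem_segV' {b m v : ℕ} : v ∈ segV (b, m) ↔ b ≤ v ∧ v < b + m := mem_segV

lemma mem_segE' {b m : ℕ} {e : Sym2 ℕ} :
    e ∈ segE (b, m) ↔ ∃ i, (b ≤ i ∧ i + 1 < b + m) ∧ e = s(i, i+1) := mem_segE

lemma mem_listV {L : List Seg} {v : ℕ} : v ∈ listV L ↔ ∃ s ∈ L, v ∈ segV s := by
  induction L with
  | nil => simp [listV]
  | cons a R ih => simp [listV, ih]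

lemma mem_listE {L : List Seg} {e : Sym2 ℕ} : e ∈ listE L ↔ ∃ s ∈ L, e ∈ segE s := by
  induction L with
  | nil => simp [listE]
  | cons a R ih => simp [listE, ih]

lemma segE_vert_mem {s : Seg} {e : Sym2 ℕ} (he : e ∈ segE s) {v : ℕ} (hv : v ∈ e) : v ∈ segV s := by
  rw [mem_segE] at he
  obtain ⟨i, ⟨h1, h2⟩, rfl⟩ := he
  rw [Sym2.mem_iff] at hv
  rw [mem_segV]; omega

lemma listV_perm : ∀ {L L' : List Seg}, L.Perm L' → listV L = listV L' := by
  intro L L' h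
  induction h with
  | nil => rfl
  | cons a _ ih => simp [listV, ih]
  | swap a b l => simp [listV]; rw [← Finset.union_assoc, ← Finset.union_assoc, Finset.union_comm (segV b)]
  | trans _ _ ih1 ih2 => rw [ih1, ih2]

lemma listE_perm : ∀ {L L' : List Seg}, L.Perm L' → listE L = listE L' := by
  intro L L' h
  induction h with
  | nil => rfl
  | cons a _ ih => simp [listE, ih]
  | swap a b l => simp [listE]; rw [← Finset.union_assoc, ← Finset.union_assoc, Finset.union_comm (segE b)]
  | trans _ _ ih1 ih2 => rw [ih1, ih2]

lemma Sep_perm {L L' : List Seg} (h : L.Perm L') (hs : Sep L) : Sep L' :=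
  ⟨fun s hs' => hs.1 s (h.mem_iff.mpr hs'), (hs.2.perm h (fun {a b} (hd : Disjoint (segV a) (segV b)) => hd.symm))⟩

lemma sep_unique {L : List Seg} (hS : Sep L) {s t : Seg} (hs : s ∈ L) (ht : t ∈ L)
    {v : ℕ} (hvs : v ∈ segV s) (hvt : v ∈ segV t) : s = t := by
  by_contra hne
  have hd : Disjoint (segV s) (segV t) :=
    haveI : Std.Symm (fun a b : Seg => Disjoint (segV a) (segV b)) := ⟨fun a b hd => hd.symm⟩
    hS.2.forall hs ht hne
  exact (Finset.disjoint_left.mp hd hvs) hvt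

lemma sep_head {s : Seg} {R : List Seg} (h : Sep (s :: R)) {v : ℕ} (hv : v ∈ segV s) :
    v ∉ listV R := by
  intro hmem
  rw [mem_listV] at hmem
  obtain ⟨t, ht, hvt⟩ := hmem
  have hd : Disjoint (segV s) (segV t) := (List.pairwise_cons.mp h.2).1 t ht
  exact (Finset.disjoint_left.mp hd hv) hvt

lemma sep_head_edge {s : Seg} {R : List Seg} (h : Sep (s :: R)) {v : ℕ} (hv : v ∈ segV s)
    {e : Sym2 ℕ} (he : e ∈ listE R) : v ∉ e := by
  intro hve
  rw [mem_listE] at he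
  obtain ⟨t, ht, het⟩ := he
  have : v ∈ segV t := segE_vert_mem het hve
  have hd : Disjoint (segV s) (segV t) := (List.pairwise_cons.mp h.2).1 t ht
  exact (Finset.disjoint_left.mp hd hv) this

lemma sep_tail {s : Seg} {R : List Seg} (h : Sep (s :: R)) : Sep R :=
  ⟨fun t ht => h.1 t (List.mem_cons_of_mem _ ht), (List.pairwise_cons.mp h.2).2⟩

lemma sep_sub_head {s s' : Seg} {R : List Seg} (h : Sep (s :: R)) (hlen : 2 ≤ s'.2)
    (hsub : segV s' ⊆ segV s) : Sep (s' :: R) := by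
  refine ⟨?_, ?_⟩
  · intro t ht
    rcases List.mem_cons.mp ht with rfl | ht
    · exact hlen
    · exact h.1 t (List.mem_cons_of_mem _ ht)
  · rw [List.pairwise_cons]
    exact ⟨fun t ht => Finset.disjoint_of_subset_left hsub ((List.pairwise_cons.mp h.2).1 t ht),
      (List.pairwise_cons.mp h.2).2⟩

lemma sep_sub_head2 {s s1 s2 : Seg} {R : List Seg} (h : Sep (s :: R)) (h1 : 2 ≤ s1.2)
    (h2 : 2 ≤ s2.2) (hsub1 : segV s1 ⊆ segV s) (hsub2 : segV s2 ⊆ segV s)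
    (hd : Disjoint (segV s1) (segV s2)) : Sep (s1 :: s2 :: R) := by
  have hp := List.pairwise_cons.mp h.2
  refine ⟨?_, ?_⟩
  · intro t ht
    rcases List.mem_cons.mp ht with rfl | ht
    · exact h1
    rcases List.mem_cons.mp ht with rfl | ht
    · exact h2
    · exact h.1 t (List.mem_cons_of_mem _ ht)
  · rw [List.pairwise_cons, List.pairwise_cons]
    refine ⟨?_, fun t ht => Finset.disjoint_of_subset_left hsub2 (hp.1 t ht), hp.2⟩
    intro t ht
    rcases List.mem_cons.mp ht with rfl | ht
    · exact hd
    · exact Finset.disjoint_of_subset_left hsub1 (hp.1 t ht)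

lemma segV_sub {b m a c : ℕ} (h1 : b ≤ a) (h2 : a + c ≤ b + m) :
    segV (a, c) ⊆ segV (b, m) := by
  intro v hv
  rw [mem_segV] at hv ⊢
  simp only at hv ⊢
  omega

lemma noIsol_sep {L : List Seg} (h : Sep L) : NoIsol (listV L) (listE L) := by
  intro v hv
  rw [mem_listV] at hv
  obtain ⟨⟨b, m⟩, hs, hvs⟩ := hv
  rw [mem_segV] at hvs
  have hb : b ≤ v := hvs.1
  have hv2 : v < b + m := hvs.2
  have hm : 2 ≤ m := h.1 _ hs
  rw [deg, Finset.card_pos]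
  rcases lt_or_ge v (b + m - 1) with hlt | hge
  · refine ⟨s(v, v+1), Finset.mem_filter.mpr ⟨mem_listE.mpr ⟨_, hs, mem_segE'.mpr ⟨v, ⟨by omega, by omega⟩, rfl⟩⟩, ?_⟩⟩
    simp
  · have hveq : v - 1 + 1 = v := by omega
    refine ⟨s(v-1, v), Finset.mem_filter.mpr ⟨mem_listE.mpr ⟨_, hs, mem_segE'.mpr ⟨v-1, ⟨by omega, by omega⟩, by rw [hveq]⟩⟩, by simp⟩⟩

/-- Any edge of `listE L` containing a vertex of segment `s ∈ L` lies in `segE s`. -/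
lemma edge_local {L : List Seg} (h : Sep L) {s : Seg} (hs : s ∈ L) {e : Sym2 ℕ}
    (he : e ∈ listE L) {v : ℕ} (hv : v ∈ e) (hvs : v ∈ segV s) : e ∈ segE s := by
  rw [mem_listE] at he
  obtain ⟨t, ht, het⟩ := he
  have : v ∈ segV t := segE_vert_mem het hv
  have := sep_unique h hs ht hvs this
  rwa [this]

lemma effV_dec {b m : ℕ} {R : List Seg} (h : Sep ((b, m) :: R)) (hm : 2 ≤ m) :
    (listV ((b, m) :: R)).erase b = listV ((b+1, m-1) :: R) := by
  have hbR : b ∉ listV R := sep_head h (mem_segV'.mpr ⟨le_refl b, by omega⟩)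
  ext v
  simp only [listV, Finset.mem_erase, Finset.mem_union, mem_segV']
  constructor
  · rintro ⟨hne, h1 | h1⟩
    · exact Or.inl ⟨by omega, by omega⟩
    · exact Or.inr h1
  · rintro (h1 | h1)
    · exact ⟨by omega, Or.inl ⟨by omega, by omega⟩⟩
    · exact ⟨fun heq => hbR (heq ▸ h1), Or.inr h1⟩

lemma effE_dec {b m : ℕ} {R : List Seg} (h : Sep ((b, m) :: R)) (hm : 2 ≤ m) :
    (listE ((b, m) :: R)).filter (fun e => b ∉ e) = listE ((b+1, m-1) :: R) := by
  ext e
  simp only [listE, Finset.mem_filter, Finset.mem_union, mem_segE']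
  constructor
  · rintro ⟨⟨i, hi, rfl⟩ | h1, hbe⟩
    · simp only [Sym2.mem_iff] at hbe
      push_neg at hbe
      exact Or.inl ⟨i, ⟨by omega, by omega⟩, rfl⟩
    · exact Or.inr h1
  · rintro (⟨i, hi, rfl⟩ | h1)
    · refine ⟨Or.inl ⟨i, ⟨by omega, by omega⟩, rfl⟩, ?_⟩
      simp only [Sym2.mem_iff]
      push_neg
      omega
    · exact ⟨Or.inr h1, sep_head_edge h (mem_segV'.mpr ⟨le_refl b, by omega⟩) h1⟩

lemma effV_split {b m p : ℕ} {R : List Seg} (h : Sep ((b, m) :: R)) (hp : 2 ≤ p)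
    (hq : p + 3 ≤ m) :
    (listV ((b, m) :: R)).erase (b + p) = listV ((b, p) :: (b+p+1, m-1-p) :: R) := by
  have hbR : b + p ∉ listV R := sep_head h (mem_segV'.mpr ⟨by omega, by omega⟩)
  ext v
  simp only [listV, Finset.mem_erase, Finset.mem_union, mem_segV']
  constructor
  · rintro ⟨hne, h1 | h1⟩
    · rcases lt_or_ge v (b + p) with hv | hv
      · exact Or.inl ⟨by omega, by omega⟩
      · exact Or.inr (Or.inl ⟨by omega, by omega⟩)
    · exact Or.inr (Or.inr h1)
  · rintro (h1 | h1 | h1)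
    · exact ⟨by omega, Or.inl ⟨by omega, by omega⟩⟩
    · exact ⟨by omega, Or.inl ⟨by omega, by omega⟩⟩
    · exact ⟨fun heq => hbR (heq ▸ h1), Or.inr h1⟩

lemma effE_split {b m p : ℕ} {R : List Seg} (h : Sep ((b, m) :: R)) (hp : 2 ≤ p)
    (hq : p + 3 ≤ m) :
    (listE ((b, m) :: R)).filter (fun e => b + p ∉ e)
      = listE ((b, p) :: (b+p+1, m-1-p) :: R) := by
  ext e
  simp only [listE, Finset.mem_filter, Finset.mem_union, mem_segE']
  constructor
  · rintro ⟨⟨i, hi, rfl⟩ | h1, hbe⟩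
    · simp only [Sym2.mem_iff] at hbe
      push_neg at hbe
      rcases lt_or_ge i (b + p) with hv | hv
      · exact Or.inl ⟨i, ⟨by omega, by omega⟩, rfl⟩
      · exact Or.inr (Or.inl ⟨i, ⟨by omega, by omega⟩, rfl⟩)
    · exact Or.inr (Or.inr h1)
  · rintro (⟨i, hi, rfl⟩ | ⟨i, hi, rfl⟩ | h1)
    · refine ⟨Or.inl ⟨i, ⟨by omega, by omega⟩, rfl⟩, ?_⟩
      simp only [Sym2.mem_iff]; push_neg; omega
    · refine ⟨Or.inl ⟨i, ⟨by omega, by omega⟩, rfl⟩, ?_⟩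
      simp only [Sym2.mem_iff]; push_neg; omega
    · exact ⟨Or.inr h1, sep_head_edge h (mem_segV'.mpr ⟨by omega, by omega⟩) h1⟩

lemma effV_cut {b m p : ℕ} {R : List Seg} (hp : 2 ≤ p) (hq : p + 2 ≤ m) :
    listV ((b, m) :: R) = listV ((b, p) :: (b+p, m-p) :: R) := by
  ext v
  simp only [listV, Finset.mem_union, mem_segV']
  constructor
  · rintro (h1 | h1)
    · rcases lt_or_ge v (b + p) with hv | hv
      · exact Or.inl ⟨by omega, by omega⟩
      · exact Or.inr (Or.inl ⟨by omega, by omega⟩)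
    · exact Or.inr (Or.inr h1)
  · rintro (h1 | h1 | h1)
    · exact Or.inl ⟨by omega, by omega⟩
    · exact Or.inl ⟨by omega, by omega⟩
    · exact Or.inr h1

lemma effE_cut {b m p : ℕ} {R : List Seg} (h : Sep ((b, m) :: R)) (hp : 2 ≤ p)
    (hq : p + 2 ≤ m) :
    (listE ((b, m) :: R)).erase s(b+p-1, b+p) = listE ((b, p) :: (b+p, m-p) :: R) := by
  have hkey : ∀ i : ℕ, (s(i, i+1) : Sym2 ℕ) = s(b+p-1, b+p) ↔ i = b+p-1 := by
    intro i
    rw [Sym2.eq_iff]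
    omega
  ext e
  simp only [listE, Finset.mem_erase, Finset.mem_union, mem_segE']
  constructor
  · rintro ⟨hne, ⟨i, hi, rfl⟩ | h1⟩
    · rw [Ne, hkey] at hne
      rcases lt_or_ge i (b + p - 1) with hv | hv
      · exact Or.inl ⟨i, ⟨by omega, by omega⟩, rfl⟩
      · exact Or.inr (Or.inl ⟨i, ⟨by omega, by omega⟩, rfl⟩)
    · exact Or.inr (Or.inr h1)
  · rintro (⟨i, hi, rfl⟩ | ⟨i, hi, rfl⟩ | h1)
    · exact ⟨by rw [Ne, hkey]; omega, Or.inl ⟨i, ⟨by omega, by omega⟩, rfl⟩⟩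
    · exact ⟨by rw [Ne, hkey]; omega, Or.inl ⟨i, ⟨by omega, by omega⟩, rfl⟩⟩
    · refine ⟨?_, Or.inr h1⟩
      intro heq
      exact sep_head_edge h (mem_segV'.mpr ⟨by omega, by omega⟩) h1
        (heq ▸ (by simp : b + p ∈ s(b+p-1, b+p)))

lemma rightOK_mid {L : List Seg} (h : Sep L) {b m : ℕ} (hs : (b, m) ∈ L) (hm : 4 ≤ m) :
    RightOK (listV L) (listE L) s(b+1, b+2) := by
  constructor
  · exact mem_listE.mpr ⟨_, hs, mem_segE'.mpr ⟨b+1, ⟨by omega, by omega⟩, rfl⟩⟩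
  · intro v hv
    rw [deg, Finset.card_pos]
    by_cases hv1 : v = b + 1
    · refine ⟨s(b, b+1), Finset.mem_filter.mpr ⟨Finset.mem_erase.mpr ⟨?_, mem_listE.mpr ⟨_, hs, mem_segE'.mpr ⟨b, ⟨le_refl b, by omega⟩, rfl⟩⟩⟩, ?_⟩⟩
      · rw [Ne, Sym2.eq_iff]; omega
      · subst hv1; simp
    by_cases hv2 : v = b + 2
    · refine ⟨s(b+2, b+3), Finset.mem_filter.mpr ⟨Finset.mem_erase.mpr ⟨?_, mem_listE.mpr ⟨_, hs, mem_segE'.mpr ⟨b+2, ⟨by omega, by omega⟩, rfl⟩⟩⟩, ?_⟩⟩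
      · rw [Ne, Sym2.eq_iff]; omega
      · subst hv2; simp
    · -- generic vertex: reuse noIsol_sep witness
      have := noIsol_sep h v hv
      rw [deg, Finset.card_pos] at this
      obtain ⟨e, he⟩ := this
      rw [Finset.mem_filter] at he
      refine ⟨e, Finset.mem_filter.mpr ⟨Finset.mem_erase.mpr ⟨?_, he.1⟩, he.2⟩⟩
      intro heq
      have hve : v ∈ e := he.2
      rw [heq, Sym2.mem_iff] at hve
      rcases hve with rfl | rfl
      · exact hv1 rfl
      · exact hv2 rfl

lemma leftOK_dec {b m : ℕ} {R : List Seg} (h : Sep ((b, m) :: R)) (hm : 3 ≤ m) :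
    LeftOK (listV ((b, m) :: R)) (listE ((b, m) :: R)) b := by
  constructor
  · exact mem_listV.mpr ⟨_, List.mem_cons_self, mem_segV'.mpr ⟨le_refl b, by omega⟩⟩
  · rw [effV_dec h (by omega), effE_dec h (by omega)]
    refine noIsol_sep (sep_sub_head (s' := (b+1, m-1)) h ?_ (segV_sub (by omega) ?_))
    · show 2 ≤ m - 1; omega
    · show b + 1 + (m - 1) ≤ b + m; omega

lemma leftOK_split {b m p : ℕ} {R : List Seg} (h : Sep ((b, m) :: R)) (hp : 2 ≤ p)
    (hpm : p + 3 ≤ m) :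
    LeftOK (listV ((b, m) :: R)) (listE ((b, m) :: R)) (b + p) := by
  constructor
  · exact mem_listV.mpr ⟨_, List.mem_cons_self, mem_segV'.mpr ⟨by omega, by omega⟩⟩
  · rw [effV_split h hp hpm, effE_split h hp hpm]
    refine noIsol_sep (sep_sub_head2 (s1 := (b, p)) (s2 := (b+p+1, m-1-p)) h ?_ ?_
      (segV_sub (le_refl b) ?_) (segV_sub ?_ ?_) ?_)
    · show 2 ≤ p; omega
    · show 2 ≤ m - 1 - p; omega
    · show b + p ≤ b + m; omega
    · show b ≤ b + p + 1; omega
    · show b + p + 1 + (m - 1 - p) ≤ b + m; omega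
    · rw [Finset.disjoint_left]
      intro a ha hb
      rw [mem_segV'] at ha hb
      omega

lemma sep_cut {b m p : ℕ} {R : List Seg} (h : Sep ((b, m) :: R)) (hp : 2 ≤ p)
    (hq : p + 2 ≤ m) : Sep ((b, p) :: (b + p, m - p) :: R) := by
  refine sep_sub_head2 (s1 := (b, p)) (s2 := (b+p, m-p)) h ?_ ?_
    (segV_sub (le_refl b) ?_) (segV_sub ?_ ?_) ?_
  · show 2 ≤ p; omega
  · show 2 ≤ m - p; omega
  · show b + p ≤ b + m; omega
  · show b ≤ b + p; omega
  · show b + p + (m - p) ≤ b + m; omega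
  · rw [Finset.disjoint_left]
    intro a ha hb
    rw [mem_segV'] at ha hb
    omega

lemma rightMove_char {L : List Seg} (h : Sep L) {e : Sym2 ℕ}
    (hR : RightOK (listV L) (listE L) e) :
    ∃ b m p, (b, m) ∈ L ∧ 2 ≤ p ∧ p + 2 ≤ m ∧ e = s(b+p-1, b+p) := by
  obtain ⟨he, hni⟩ := hR
  rw [mem_listE] at he
  obtain ⟨⟨b, m⟩, hs, hes⟩ := he
  rw [mem_segE'] at hes
  obtain ⟨i, ⟨hbi, him⟩, rfl⟩ := hes
  have hm2 : 2 ≤ m := h.1 _ hs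
  -- the only edge of listE L containing the segment start b is s(b, b+1)
  have hstart : ∀ e' ∈ listE L, b ∈ e' → e' = s(b, b+1) := by
    intro e' he' hbe'
    have := edge_local h hs he' hbe' (mem_segV'.mpr ⟨le_refl b, by omega⟩)
    rw [mem_segE'] at this
    obtain ⟨i', ⟨h1, h2⟩, rfl⟩ := this
    rw [Sym2.mem_iff] at hbe'
    have : i' = b := by omega
    subst this; rfl
  have hend : ∀ e' ∈ listE L, (b + m - 1) ∈ e' → e' = s(b+m-2, b+m-1) := by
    intro e' he' hbe'
    have := edge_local h hs he' hbe' (mem_segV'.mpr ⟨by omega, by omega⟩)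
    rw [mem_segE'] at this
    obtain ⟨i', ⟨h1, h2⟩, rfl⟩ := this
    rw [Sym2.mem_iff] at hbe'
    have h3 : i' = b + m - 2 := by omega
    have h4 : i' + 1 = b + m - 1 := by omega
    rw [← h3, ← h4]
  have hib : i ≠ b := by
    intro hib
    subst hib
    have h0 := hni i (mem_listV.mpr ⟨_, hs, mem_segV'.mpr ⟨le_refl i, by omega⟩⟩)
    rw [deg, Finset.card_pos] at h0
    obtain ⟨e', he'⟩ := h0
    rw [Finset.mem_filter, Finset.mem_erase] at he'
    exact he'.1.1 (hstart e' he'.1.2 he'.2)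
  have hie : i + 1 ≠ b + m - 1 := by
    intro hie
    have h0 := hni (b + m - 1) (mem_listV.mpr ⟨_, hs, mem_segV'.mpr ⟨by omega, by omega⟩⟩)
    rw [deg, Finset.card_pos] at h0
    obtain ⟨e', he'⟩ := h0
    rw [Finset.mem_filter, Finset.mem_erase] at he'
    apply he'.1.1
    have h1 : i = b + m - 2 := by omega
    have h2 : b + m - 1 = i + 1 := by omega
    rw [hend e' he'.1.2 he'.2, h2, ← h1]
  refine ⟨b, m, i - b + 1, hs, by omega, by omega, ?_⟩
  have h1 : b + (i - b + 1) - 1 = i := by omega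
  have h2 : b + (i - b + 1) = i + 1 := by omega
  rw [h1, h2]

def cnt (P : ℕ → Prop) [DecidablePred P] : List Seg → ℕ
  | [] => 0
  | s :: R => (if P s.2 then 1 else 0) + cnt P R

lemma cnt_perm (P : ℕ → Prop) [DecidablePred P] :
    ∀ {L L' : List Seg}, L.Perm L' → cnt P L = cnt P L' := by
  intro L L' h
  induction h with
  | nil => rfl
  | cons a _ ih => simp [cnt, ih]
  | swap a b l => simp [cnt]; omega
  | trans _ _ ih1 ih2 => rw [ih1, ih2]

lemma cnt_pos {P : ℕ → Prop} [DecidablePred P] {L : List Seg} (h : 0 < cnt P L) :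
    ∃ s ∈ L, P s.2 := by
  induction L with
  | nil => simp [cnt] at h
  | cons a R ih =>
    rw [cnt] at h
    by_cases hP : P a.2
    · exact ⟨a, List.mem_cons_self, hP⟩
    · rw [if_neg hP] at h
      obtain ⟨s, hs, hPs⟩ := ih (by omega)
      exact ⟨s, List.mem_cons_of_mem _ hs, hPs⟩

/-- Statistics of a position. -/
def K : List Seg → ℕ := cnt (· = 3)
def C4 : List Seg → ℕ := cnt (· = 4)
def C5 : List Seg → ℕ := cnt (· = 5)
def C6 : List Seg → ℕ := cnt (· = 6)
def C7 : List Seg → ℕ := cnt (· = 7)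
def C8 : List Seg → ℕ := cnt (· = 8)
def RR : List Seg → ℕ := cnt (9 ≤ ·)
def T : List Seg → ℕ := cnt (4 ≤ ·)

lemma T_split : ∀ L : List Seg, T L = C4 L + C5 L + C6 L + C7 L + C8 L + RR L := by
  intro L
  induction L with
  | nil => rfl
  | cons a R ih =>
    simp only [T, C4, C5, C6, C7, C8, RR, cnt] at *
    split_ifs <;> omega

/-- Candidate set for `0 ⧏ G` (Left wins moving first). -/
def PF (L : List Seg) : Prop := 1 ≤ T L ∧ ¬(K L = 0 ∧ C4 L = 2 ∧ T L = 2)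

/-- Candidate set for `0 ≤ G` (Left wins moving second). -/
def PW (L : List Seg) : Prop :=
  ¬(C4 L = 1 ∧ T L = 1) ∧ ¬(C5 L = 1 ∧ T L = 1) ∧ ¬(C6 L = 1 ∧ T L = 1) ∧
  ¬(K L = 0 ∧ C4 L = 3 ∧ T L = 3) ∧ ¬(K L = 0 ∧ C4 L = 1 ∧ C6 L = 1 ∧ T L = 2) ∧
  ¬(K L = 0 ∧ C8 L = 1 ∧ T L = 1)

lemma PF_perm {L L' : List Seg} (h : L.Perm L') (hp : PF L) : PF L' := by
  unfold PF at *
  rw [K, C4, T] at *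
  rw [← cnt_perm _ h, ← cnt_perm _ h, ← cnt_perm _ h]
  exact hp

lemma PW_perm {L L' : List Seg} (h : L.Perm L') (hp : PW L) : PW L' := by
  unfold PW at *
  rw [K, C4, C5, C6, C8, T] at *
  rw [← cnt_perm (· = 3) h, ← cnt_perm (· = 4) h, ← cnt_perm (· = 5) h,
    ← cnt_perm (· = 6) h, ← cnt_perm (· = 8) h, ← cnt_perm (4 ≤ ·) h]
  exact hp

def mu : List Seg → ℕ
  | [] => 0
  | s :: R => (2 * s.2 - 1) + mu R

lemma mu_perm : ∀ {L L' : List Seg}, L.Perm L' → mu L = mu L' := by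
  intro L L' h
  induction h with
  | nil => rfl
  | cons a _ ih => simp [mu, ih]
  | swap a b l => simp [mu]; omega
  | trans _ _ ih1 ih2 => rw [ih1, ih2]

lemma ite_char (c : Prop) [Decidable c] :
    ((if c then (1:ℕ) else 0) = 1 ∧ c) ∨ ((if c then (1:ℕ) else 0) = 0 ∧ ¬c) := by
  split_ifs with h
  · exact Or.inl ⟨rfl, h⟩
  · exact Or.inr ⟨rfl, h⟩

lemma closure2 {b m x y p q : ℕ} {R : List Seg} (hPW : PW ((b, m) :: R)) (hp : 2 ≤ p)
    (hq : 2 ≤ q) (hm : p + q = m) : PF ((x, p) :: (y, q) :: R) := by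
  have hTsR := T_split R
  simp only [PW, PF, K, C4, C5, C6, C7, C8, RR, T, cnt] at *
  have i1 := ite_char (p = 3); have i2 := ite_char (q = 3)
  have i3 := ite_char (p = 4); have i4 := ite_char (q = 4)
  have i5 := ite_char (4 ≤ p); have i6 := ite_char (4 ≤ q)
  have i7 := ite_char (m = 3); have i8 := ite_char (m = 4)
  have i9 := ite_char (m = 5); have i10 := ite_char (m = 6)
  have i11 := ite_char (m = 8); have i12 := ite_char (4 ≤ m)
  omega

lemma pick {P : ℕ → Prop} [DecidablePred P] {L : List Seg} (h : 0 < cnt P L) :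
    ∃ b m R, L.Perm ((b, m) :: R) ∧ P m := by
  obtain ⟨⟨b, m⟩, hs, hP⟩ := cnt_pos h
  exact ⟨b, m, _, List.perm_cons_erase hs, hP⟩

lemma closure1 {L : List Seg} (hPF : PF L) :
    ∃ b m R, L.Perm ((b, m) :: R) ∧ 3 ≤ m ∧
      (PW ((b+1, m-1) :: R) ∨
       ∃ p, 2 ≤ p ∧ p + 3 ≤ m ∧ PW ((b, p) :: (b+p+1, m-1-p) :: R)) := by
  have hPF1 := hPF.1
  have hPF2 := hPF.2
  by_cases hT1 : T L = 1
  · by_cases h4 : 0 < C4 L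
    · obtain ⟨b, m, R, hperm, hP⟩ := pick (P := (· = 4)) h4
      refine ⟨b, m, R, hperm, by omega, Or.inl ?_⟩
      have e3 : K L = 0 + K R := by
        have h : K L = (if m = 3 then 1 else 0) + K R := cnt_perm _ hperm
        rwa [if_neg (by omega : ¬(m = 3))] at h
      have e4 : C4 L = 1 + C4 R := by
        have h : C4 L = (if m = 4 then 1 else 0) + C4 R := cnt_perm _ hperm
        rwa [if_pos (by omega : m = 4)] at h
      have e5 : C5 L = 0 + C5 R := by
        have h : C5 L = (if m = 5 then 1 else 0) + C5 R := cnt_perm _ hperm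
        rwa [if_neg (by omega : ¬(m = 5))] at h
      have e6 : C6 L = 0 + C6 R := by
        have h : C6 L = (if m = 6 then 1 else 0) + C6 R := cnt_perm _ hperm
        rwa [if_neg (by omega : ¬(m = 6))] at h
      have e7 : C7 L = 0 + C7 R := by
        have h : C7 L = (if m = 7 then 1 else 0) + C7 R := cnt_perm _ hperm
        rwa [if_neg (by omega : ¬(m = 7))] at h
      have e8 : C8 L = 0 + C8 R := by
        have h : C8 L = (if m = 8 then 1 else 0) + C8 R := cnt_perm _ hperm
        rwa [if_neg (by omega : ¬(m = 8))] at h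
      have e9 : RR L = 0 + RR R := by
        have h : RR L = (if 9 ≤ m then 1 else 0) + RR R := cnt_perm _ hperm
        rwa [if_neg (by omega : ¬(9 ≤ m))] at h
      have eT : T L = 1 + T R := by
        have h : T L = (if 4 ≤ m then 1 else 0) + T R := cnt_perm _ hperm
        rwa [if_pos (by omega : 4 ≤ m)] at h
      have hTsR := T_split R
      have hTsL := T_split L
      simp only [PF, PW, K, C4, C5, C6, C7, C8, RR, T, cnt] at *
      have ja0 := ite_char (m - 1 = 3)
      have ja1 := ite_char (m - 1 = 4)
      have ja2 := ite_char (m - 1 = 5)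
      have ja3 := ite_char (m - 1 = 6)
      have ja4 := ite_char (m - 1 = 7)
      have ja5 := ite_char (m - 1 = 8)
      have ja6 := ite_char (9 ≤ m - 1)
      have ja7 := ite_char (4 ≤ m - 1)
      omega
    by_cases h5 : 0 < C5 L
    · obtain ⟨b, m, R, hperm, hP⟩ := pick (P := (· = 5)) h5
      refine ⟨b, m, R, hperm, by omega, Or.inr ⟨2, by omega, by omega, ?_⟩⟩
      have e3 : K L = 0 + K R := by
        have h : K L = (if m = 3 then 1 else 0) + K R := cnt_perm _ hperm
        rwa [if_neg (by omega : ¬(m = 3))] at h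
      have e4 : C4 L = 0 + C4 R := by
        have h : C4 L = (if m = 4 then 1 else 0) + C4 R := cnt_perm _ hperm
        rwa [if_neg (by omega : ¬(m = 4))] at h
      have e5 : C5 L = 1 + C5 R := by
        have h : C5 L = (if m = 5 then 1 else 0) + C5 R := cnt_perm _ hperm
        rwa [if_pos (by omega : m = 5)] at h
      have e6 : C6 L = 0 + C6 R := by
        have h : C6 L = (if m = 6 then 1 else 0) + C6 R := cnt_perm _ hperm
        rwa [if_neg (by omega : ¬(m = 6))] at h
      have e7 : C7 L = 0 + C7 R := by
        have h : C7 L = (if m = 7 then 1 else 0) + C7 R := cnt_perm _ hperm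
        rwa [if_neg (by omega : ¬(m = 7))] at h
      have e8 : C8 L = 0 + C8 R := by
        have h : C8 L = (if m = 8 then 1 else 0) + C8 R := cnt_perm _ hperm
        rwa [if_neg (by omega : ¬(m = 8))] at h
      have e9 : RR L = 0 + RR R := by
        have h : RR L = (if 9 ≤ m then 1 else 0) + RR R := cnt_perm _ hperm
        rwa [if_neg (by omega : ¬(9 ≤ m))] at h
      have eT : T L = 1 + T R := by
        have h : T L = (if 4 ≤ m then 1 else 0) + T R := cnt_perm _ hperm
        rwa [if_pos (by omega : 4 ≤ m)] at h
      have hTsR := T_split R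
      have hTsL := T_split L
      simp only [PF, PW, K, C4, C5, C6, C7, C8, RR, T, cnt] at *
      have ja0 := ite_char (2 = 3)
      have ja1 := ite_char (2 = 4)
      have ja2 := ite_char (2 = 5)
      have ja3 := ite_char (2 = 6)
      have ja4 := ite_char (2 = 7)
      have ja5 := ite_char (2 = 8)
      have ja6 := ite_char (9 ≤ 2)
      have ja7 := ite_char (4 ≤ 2)
      have jb0 := ite_char (m - 1 - 2 = 3)
      have jb1 := ite_char (m - 1 - 2 = 4)
      have jb2 := ite_char (m - 1 - 2 = 5)
      have jb3 := ite_char (m - 1 - 2 = 6)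
      have jb4 := ite_char (m - 1 - 2 = 7)
      have jb5 := ite_char (m - 1 - 2 = 8)
      have jb6 := ite_char (9 ≤ m - 1 - 2)
      have jb7 := ite_char (4 ≤ m - 1 - 2)
      omega
    by_cases h6 : 0 < C6 L
    · obtain ⟨b, m, R, hperm, hP⟩ := pick (P := (· = 6)) h6
      refine ⟨b, m, R, hperm, by omega, Or.inr ⟨2, by omega, by omega, ?_⟩⟩
      have e3 : K L = 0 + K R := by
        have h : K L = (if m = 3 then 1 else 0) + K R := cnt_perm _ hperm
        rwa [if_neg (by omega : ¬(m = 3))] at h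
      have e4 : C4 L = 0 + C4 R := by
        have h : C4 L = (if m = 4 then 1 else 0) + C4 R := cnt_perm _ hperm
        rwa [if_neg (by omega : ¬(m = 4))] at h
      have e5 : C5 L = 0 + C5 R := by
        have h : C5 L = (if m = 5 then 1 else 0) + C5 R := cnt_perm _ hperm
        rwa [if_neg (by omega : ¬(m = 5))] at h
      have e6 : C6 L = 1 + C6 R := by
        have h : C6 L = (if m = 6 then 1 else 0) + C6 R := cnt_perm _ hperm
        rwa [if_pos (by omega : m = 6)] at h
      have e7 : C7 L = 0 + C7 R := by
        have h : C7 L = (if m = 7 then 1 else 0) + C7 R := cnt_perm _ hperm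
        rwa [if_neg (by omega : ¬(m = 7))] at h
      have e8 : C8 L = 0 + C8 R := by
        have h : C8 L = (if m = 8 then 1 else 0) + C8 R := cnt_perm _ hperm
        rwa [if_neg (by omega : ¬(m = 8))] at h
      have e9 : RR L = 0 + RR R := by
        have h : RR L = (if 9 ≤ m then 1 else 0) + RR R := cnt_perm _ hperm
        rwa [if_neg (by omega : ¬(9 ≤ m))] at h
      have eT : T L = 1 + T R := by
        have h : T L = (if 4 ≤ m then 1 else 0) + T R := cnt_perm _ hperm
        rwa [if_pos (by omega : 4 ≤ m)] at h
      have hTsR := T_split R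
      have hTsL := T_split L
      simp only [PF, PW, K, C4, C5, C6, C7, C8, RR, T, cnt] at *
      have ja0 := ite_char (2 = 3)
      have ja1 := ite_char (2 = 4)
      have ja2 := ite_char (2 = 5)
      have ja3 := ite_char (2 = 6)
      have ja4 := ite_char (2 = 7)
      have ja5 := ite_char (2 = 8)
      have ja6 := ite_char (9 ≤ 2)
      have ja7 := ite_char (4 ≤ 2)
      have jb0 := ite_char (m - 1 - 2 = 3)
      have jb1 := ite_char (m - 1 - 2 = 4)
      have jb2 := ite_char (m - 1 - 2 = 5)
      have jb3 := ite_char (m - 1 - 2 = 6)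
      have jb4 := ite_char (m - 1 - 2 = 7)
      have jb5 := ite_char (m - 1 - 2 = 8)
      have jb6 := ite_char (9 ≤ m - 1 - 2)
      have jb7 := ite_char (4 ≤ m - 1 - 2)
      omega
    by_cases h7 : 0 < C7 L
    · obtain ⟨b, m, R, hperm, hP⟩ := pick (P := (· = 7)) h7
      refine ⟨b, m, R, hperm, by omega, Or.inr ⟨3, by omega, by omega, ?_⟩⟩
      have e3 : K L = 0 + K R := by
        have h : K L = (if m = 3 then 1 else 0) + K R := cnt_perm _ hperm
        rwa [if_neg (by omega : ¬(m = 3))] at h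
      have e4 : C4 L = 0 + C4 R := by
        have h : C4 L = (if m = 4 then 1 else 0) + C4 R := cnt_perm _ hperm
        rwa [if_neg (by omega : ¬(m = 4))] at h
      have e5 : C5 L = 0 + C5 R := by
        have h : C5 L = (if m = 5 then 1 else 0) + C5 R := cnt_perm _ hperm
        rwa [if_neg (by omega : ¬(m = 5))] at h
      have e6 : C6 L = 0 + C6 R := by
        have h : C6 L = (if m = 6 then 1 else 0) + C6 R := cnt_perm _ hperm
        rwa [if_neg (by omega : ¬(m = 6))] at h
      have e7 : C7 L = 1 + C7 R := by
        have h : C7 L = (if m = 7 then 1 else 0) + C7 R := cnt_perm _ hperm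
        rwa [if_pos (by omega : m = 7)] at h
      have e8 : C8 L = 0 + C8 R := by
        have h : C8 L = (if m = 8 then 1 else 0) + C8 R := cnt_perm _ hperm
        rwa [if_neg (by omega : ¬(m = 8))] at h
      have e9 : RR L = 0 + RR R := by
        have h : RR L = (if 9 ≤ m then 1 else 0) + RR R := cnt_perm _ hperm
        rwa [if_neg (by omega : ¬(9 ≤ m))] at h
      have eT : T L = 1 + T R := by
        have h : T L = (if 4 ≤ m then 1 else 0) + T R := cnt_perm _ hperm
        rwa [if_pos (by omega : 4 ≤ m)] at h
      have hTsR := T_split R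
      have hTsL := T_split L
      simp only [PF, PW, K, C4, C5, C6, C7, C8, RR, T, cnt] at *
      have ja0 := ite_char (3 = 3)
      have ja1 := ite_char (3 = 4)
      have ja2 := ite_char (3 = 5)
      have ja3 := ite_char (3 = 6)
      have ja4 := ite_char (3 = 7)
      have ja5 := ite_char (3 = 8)
      have ja6 := ite_char (9 ≤ 3)
      have ja7 := ite_char (4 ≤ 3)
      have jb0 := ite_char (m - 1 - 3 = 3)
      have jb1 := ite_char (m - 1 - 3 = 4)
      have jb2 := ite_char (m - 1 - 3 = 5)
      have jb3 := ite_char (m - 1 - 3 = 6)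
      have jb4 := ite_char (m - 1 - 3 = 7)
      have jb5 := ite_char (m - 1 - 3 = 8)
      have jb6 := ite_char (9 ≤ m - 1 - 3)
      have jb7 := ite_char (4 ≤ m - 1 - 3)
      omega
    by_cases h8 : 0 < C8 L
    · obtain ⟨b, m, R, hperm, hP⟩ := pick (P := (· = 8)) h8
      refine ⟨b, m, R, hperm, by omega, Or.inl ?_⟩
      have e3 : K L = 0 + K R := by
        have h : K L = (if m = 3 then 1 else 0) + K R := cnt_perm _ hperm
        rwa [if_neg (by omega : ¬(m = 3))] at h
      have e4 : C4 L = 0 + C4 R := by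
        have h : C4 L = (if m = 4 then 1 else 0) + C4 R := cnt_perm _ hperm
        rwa [if_neg (by omega : ¬(m = 4))] at h
      have e5 : C5 L = 0 + C5 R := by
        have h : C5 L = (if m = 5 then 1 else 0) + C5 R := cnt_perm _ hperm
        rwa [if_neg (by omega : ¬(m = 5))] at h
      have e6 : C6 L = 0 + C6 R := by
        have h : C6 L = (if m = 6 then 1 else 0) + C6 R := cnt_perm _ hperm
        rwa [if_neg (by omega : ¬(m = 6))] at h
      have e7 : C7 L = 0 + C7 R := by
        have h : C7 L = (if m = 7 then 1 else 0) + C7 R := cnt_perm _ hperm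
        rwa [if_neg (by omega : ¬(m = 7))] at h
      have e8 : C8 L = 1 + C8 R := by
        have h : C8 L = (if m = 8 then 1 else 0) + C8 R := cnt_perm _ hperm
        rwa [if_pos (by omega : m = 8)] at h
      have e9 : RR L = 0 + RR R := by
        have h : RR L = (if 9 ≤ m then 1 else 0) + RR R := cnt_perm _ hperm
        rwa [if_neg (by omega : ¬(9 ≤ m))] at h
      have eT : T L = 1 + T R := by
        have h : T L = (if 4 ≤ m then 1 else 0) + T R := cnt_perm _ hperm
        rwa [if_pos (by omega : 4 ≤ m)] at h
      have hTsR := T_split R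
      have hTsL := T_split L
      simp only [PF, PW, K, C4, C5, C6, C7, C8, RR, T, cnt] at *
      have ja0 := ite_char (m - 1 = 3)
      have ja1 := ite_char (m - 1 = 4)
      have ja2 := ite_char (m - 1 = 5)
      have ja3 := ite_char (m - 1 = 6)
      have ja4 := ite_char (m - 1 = 7)
      have ja5 := ite_char (m - 1 = 8)
      have ja6 := ite_char (9 ≤ m - 1)
      have ja7 := ite_char (4 ≤ m - 1)
      omega
    · have hrr : 0 < RR L := by have := T_split L; omega
      obtain ⟨b, m, R, hperm, hP⟩ := pick (P := (9 ≤ ·)) hrr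
      by_cases hm9 : m = 9
      · refine ⟨b, m, R, hperm, by omega, Or.inr ⟨4, by omega, by omega, ?_⟩⟩
        have e3 : K L = 0 + K R := by
          have h : K L = (if m = 3 then 1 else 0) + K R := cnt_perm _ hperm
          rwa [if_neg (by omega : ¬(m = 3))] at h
        have e4 : C4 L = 0 + C4 R := by
          have h : C4 L = (if m = 4 then 1 else 0) + C4 R := cnt_perm _ hperm
          rwa [if_neg (by omega : ¬(m = 4))] at h
        have e5 : C5 L = 0 + C5 R := by
          have h : C5 L = (if m = 5 then 1 else 0) + C5 R := cnt_perm _ hperm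
          rwa [if_neg (by omega : ¬(m = 5))] at h
        have e6 : C6 L = 0 + C6 R := by
          have h : C6 L = (if m = 6 then 1 else 0) + C6 R := cnt_perm _ hperm
          rwa [if_neg (by omega : ¬(m = 6))] at h
        have e7 : C7 L = 0 + C7 R := by
          have h : C7 L = (if m = 7 then 1 else 0) + C7 R := cnt_perm _ hperm
          rwa [if_neg (by omega : ¬(m = 7))] at h
        have e8 : C8 L = 0 + C8 R := by
          have h : C8 L = (if m = 8 then 1 else 0) + C8 R := cnt_perm _ hperm
          rwa [if_neg (by omega : ¬(m = 8))] at h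
        have e9 : RR L = 1 + RR R := by
          have h : RR L = (if 9 ≤ m then 1 else 0) + RR R := cnt_perm _ hperm
          rwa [if_pos (by omega : 9 ≤ m)] at h
        have eT : T L = 1 + T R := by
          have h : T L = (if 4 ≤ m then 1 else 0) + T R := cnt_perm _ hperm
          rwa [if_pos (by omega : 4 ≤ m)] at h
        have hTsR := T_split R
        have hTsL := T_split L
        simp only [PF, PW, K, C4, C5, C6, C7, C8, RR, T, cnt] at *
        have ja0 := ite_char (4 = 3)
        have ja1 := ite_char (4 = 4)
        have ja2 := ite_char (4 = 5)
        have ja3 := ite_char (4 = 6)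
        have ja4 := ite_char (4 = 7)
        have ja5 := ite_char (4 = 8)
        have ja6 := ite_char (9 ≤ 4)
        have ja7 := ite_char (4 ≤ 4)
        have jb0 := ite_char (m - 1 - 4 = 3)
        have jb1 := ite_char (m - 1 - 4 = 4)
        have jb2 := ite_char (m - 1 - 4 = 5)
        have jb3 := ite_char (m - 1 - 4 = 6)
        have jb4 := ite_char (m - 1 - 4 = 7)
        have jb5 := ite_char (m - 1 - 4 = 8)
        have jb6 := ite_char (9 ≤ m - 1 - 4)
        have jb7 := ite_char (4 ≤ m - 1 - 4)
        omega
      · refine ⟨b, m, R, hperm, by omega, Or.inl ?_⟩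
        have e3 : K L = 0 + K R := by
          have h : K L = (if m = 3 then 1 else 0) + K R := cnt_perm _ hperm
          rwa [if_neg (by omega : ¬(m = 3))] at h
        have e4 : C4 L = 0 + C4 R := by
          have h : C4 L = (if m = 4 then 1 else 0) + C4 R := cnt_perm _ hperm
          rwa [if_neg (by omega : ¬(m = 4))] at h
        have e5 : C5 L = 0 + C5 R := by
          have h : C5 L = (if m = 5 then 1 else 0) + C5 R := cnt_perm _ hperm
          rwa [if_neg (by omega : ¬(m = 5))] at h
        have e6 : C6 L = 0 + C6 R := by
          have h : C6 L = (if m = 6 then 1 else 0) + C6 R := cnt_perm _ hperm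
          rwa [if_neg (by omega : ¬(m = 6))] at h
        have e7 : C7 L = 0 + C7 R := by
          have h : C7 L = (if m = 7 then 1 else 0) + C7 R := cnt_perm _ hperm
          rwa [if_neg (by omega : ¬(m = 7))] at h
        have e8 : C8 L = 0 + C8 R := by
          have h : C8 L = (if m = 8 then 1 else 0) + C8 R := cnt_perm _ hperm
          rwa [if_neg (by omega : ¬(m = 8))] at h
        have e9 : RR L = 1 + RR R := by
          have h : RR L = (if 9 ≤ m then 1 else 0) + RR R := cnt_perm _ hperm
          rwa [if_pos (by omega : 9 ≤ m)] at h
        have eT : T L = 1 + T R := by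
          have h : T L = (if 4 ≤ m then 1 else 0) + T R := cnt_perm _ hperm
          rwa [if_pos (by omega : 4 ≤ m)] at h
        have hTsR := T_split R
        have hTsL := T_split L
        simp only [PF, PW, K, C4, C5, C6, C7, C8, RR, T, cnt] at *
        have ja0 := ite_char (m - 1 = 3)
        have ja1 := ite_char (m - 1 = 4)
        have ja2 := ite_char (m - 1 = 5)
        have ja3 := ite_char (m - 1 = 6)
        have ja4 := ite_char (m - 1 = 7)
        have ja5 := ite_char (m - 1 = 8)
        have ja6 := ite_char (9 ≤ m - 1)
        have ja7 := ite_char (4 ≤ m - 1)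
        omega
  by_cases hsp1 : C4 L = 2 ∧ T L = 2
  · have hk : 0 < K L := by omega
    obtain ⟨b, m, R, hperm, hP⟩ := pick (P := (· = 3)) hk
    refine ⟨b, m, R, hperm, by omega, Or.inl ?_⟩
    have e3 : K L = 1 + K R := by
      have h : K L = (if m = 3 then 1 else 0) + K R := cnt_perm _ hperm
      rwa [if_pos (by omega : m = 3)] at h
    have e4 : C4 L = 0 + C4 R := by
      have h : C4 L = (if m = 4 then 1 else 0) + C4 R := cnt_perm _ hperm
      rwa [if_neg (by omega : ¬(m = 4))] at h
    have e5 : C5 L = 0 + C5 R := by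
      have h : C5 L = (if m = 5 then 1 else 0) + C5 R := cnt_perm _ hperm
      rwa [if_neg (by omega : ¬(m = 5))] at h
    have e6 : C6 L = 0 + C6 R := by
      have h : C6 L = (if m = 6 then 1 else 0) + C6 R := cnt_perm _ hperm
      rwa [if_neg (by omega : ¬(m = 6))] at h
    have e7 : C7 L = 0 + C7 R := by
      have h : C7 L = (if m = 7 then 1 else 0) + C7 R := cnt_perm _ hperm
      rwa [if_neg (by omega : ¬(m = 7))] at h
    have e8 : C8 L = 0 + C8 R := by
      have h : C8 L = (if m = 8 then 1 else 0) + C8 R := cnt_perm _ hperm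
      rwa [if_neg (by omega : ¬(m = 8))] at h
    have e9 : RR L = 0 + RR R := by
      have h : RR L = (if 9 ≤ m then 1 else 0) + RR R := cnt_perm _ hperm
      rwa [if_neg (by omega : ¬(9 ≤ m))] at h
    have eT : T L = 0 + T R := by
      have h : T L = (if 4 ≤ m then 1 else 0) + T R := cnt_perm _ hperm
      rwa [if_neg (by omega : ¬(4 ≤ m))] at h
    have hTsR := T_split R
    have hTsL := T_split L
    simp only [PF, PW, K, C4, C5, C6, C7, C8, RR, T, cnt] at *
    have ja0 := ite_char (m - 1 = 3)
    have ja1 := ite_char (m - 1 = 4)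
    have ja2 := ite_char (m - 1 = 5)
    have ja3 := ite_char (m - 1 = 6)
    have ja4 := ite_char (m - 1 = 7)
    have ja5 := ite_char (m - 1 = 8)
    have ja6 := ite_char (9 ≤ m - 1)
    have ja7 := ite_char (4 ≤ m - 1)
    omega
  by_cases hsp2 : K L = 0 ∧ C4 L = 1 ∧ C7 L = 1 ∧ T L = 2
  · have h7 : 0 < C7 L := by omega
    obtain ⟨b, m, R, hperm, hP⟩ := pick (P := (· = 7)) h7
    refine ⟨b, m, R, hperm, by omega, Or.inr ⟨2, by omega, by omega, ?_⟩⟩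
    have e3 : K L = 0 + K R := by
      have h : K L = (if m = 3 then 1 else 0) + K R := cnt_perm _ hperm
      rwa [if_neg (by omega : ¬(m = 3))] at h
    have e4 : C4 L = 0 + C4 R := by
      have h : C4 L = (if m = 4 then 1 else 0) + C4 R := cnt_perm _ hperm
      rwa [if_neg (by omega : ¬(m = 4))] at h
    have e5 : C5 L = 0 + C5 R := by
      have h : C5 L = (if m = 5 then 1 else 0) + C5 R := cnt_perm _ hperm
      rwa [if_neg (by omega : ¬(m = 5))] at h
    have e6 : C6 L = 0 + C6 R := by
      have h : C6 L = (if m = 6 then 1 else 0) + C6 R := cnt_perm _ hperm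
      rwa [if_neg (by omega : ¬(m = 6))] at h
    have e7 : C7 L = 1 + C7 R := by
      have h : C7 L = (if m = 7 then 1 else 0) + C7 R := cnt_perm _ hperm
      rwa [if_pos (by omega : m = 7)] at h
    have e8 : C8 L = 0 + C8 R := by
      have h : C8 L = (if m = 8 then 1 else 0) + C8 R := cnt_perm _ hperm
      rwa [if_neg (by omega : ¬(m = 8))] at h
    have e9 : RR L = 0 + RR R := by
      have h : RR L = (if 9 ≤ m then 1 else 0) + RR R := cnt_perm _ hperm
      rwa [if_neg (by omega : ¬(9 ≤ m))] at h
    have eT : T L = 1 + T R := by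
      have h : T L = (if 4 ≤ m then 1 else 0) + T R := cnt_perm _ hperm
      rwa [if_pos (by omega : 4 ≤ m)] at h
    have hTsR := T_split R
    have hTsL := T_split L
    simp only [PF, PW, K, C4, C5, C6, C7, C8, RR, T, cnt] at *
    have ja0 := ite_char (2 = 3)
    have ja1 := ite_char (2 = 4)
    have ja2 := ite_char (2 = 5)
    have ja3 := ite_char (2 = 6)
    have ja4 := ite_char (2 = 7)
    have ja5 := ite_char (2 = 8)
    have ja6 := ite_char (9 ≤ 2)
    have ja7 := ite_char (4 ≤ 2)
    have jb0 := ite_char (m - 1 - 2 = 3)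
    have jb1 := ite_char (m - 1 - 2 = 4)
    have jb2 := ite_char (m - 1 - 2 = 5)
    have jb3 := ite_char (m - 1 - 2 = 6)
    have jb4 := ite_char (m - 1 - 2 = 7)
    have jb5 := ite_char (m - 1 - 2 = 8)
    have jb6 := ite_char (9 ≤ m - 1 - 2)
    have jb7 := ite_char (4 ≤ m - 1 - 2)
    omega
  by_cases hall4 : C4 L = T L
  · have h4 : 0 < C4 L := by omega
    obtain ⟨b, m, R, hperm, hP⟩ := pick (P := (· = 4)) h4
    refine ⟨b, m, R, hperm, by omega, Or.inl ?_⟩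
    have e3 : K L = 0 + K R := by
      have h : K L = (if m = 3 then 1 else 0) + K R := cnt_perm _ hperm
      rwa [if_neg (by omega : ¬(m = 3))] at h
    have e4 : C4 L = 1 + C4 R := by
      have h : C4 L = (if m = 4 then 1 else 0) + C4 R := cnt_perm _ hperm
      rwa [if_pos (by omega : m = 4)] at h
    have e5 : C5 L = 0 + C5 R := by
      have h : C5 L = (if m = 5 then 1 else 0) + C5 R := cnt_perm _ hperm
      rwa [if_neg (by omega : ¬(m = 5))] at h
    have e6 : C6 L = 0 + C6 R := by
      have h : C6 L = (if m = 6 then 1 else 0) + C6 R := cnt_perm _ hperm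
      rwa [if_neg (by omega : ¬(m = 6))] at h
    have e7 : C7 L = 0 + C7 R := by
      have h : C7 L = (if m = 7 then 1 else 0) + C7 R := cnt_perm _ hperm
      rwa [if_neg (by omega : ¬(m = 7))] at h
    have e8 : C8 L = 0 + C8 R := by
      have h : C8 L = (if m = 8 then 1 else 0) + C8 R := cnt_perm _ hperm
      rwa [if_neg (by omega : ¬(m = 8))] at h
    have e9 : RR L = 0 + RR R := by
      have h : RR L = (if 9 ≤ m then 1 else 0) + RR R := cnt_perm _ hperm
      rwa [if_neg (by omega : ¬(9 ≤ m))] at h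
    have eT : T L = 1 + T R := by
      have h : T L = (if 4 ≤ m then 1 else 0) + T R := cnt_perm _ hperm
      rwa [if_pos (by omega : 4 ≤ m)] at h
    have hTsR := T_split R
    have hTsL := T_split L
    simp only [PF, PW, K, C4, C5, C6, C7, C8, RR, T, cnt] at *
    have ja0 := ite_char (m - 1 = 3)
    have ja1 := ite_char (m - 1 = 4)
    have ja2 := ite_char (m - 1 = 5)
    have ja3 := ite_char (m - 1 = 6)
    have ja4 := ite_char (m - 1 = 7)
    have ja5 := ite_char (m - 1 = 8)
    have ja6 := ite_char (9 ≤ m - 1)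
    have ja7 := ite_char (4 ≤ m - 1)
    omega
  by_cases hsp3 : K L = 0 ∧ C4 L = 2 ∧ C5 L = 1 ∧ T L = 3
  · have h5 : 0 < C5 L := by omega
    obtain ⟨b, m, R, hperm, hP⟩ := pick (P := (· = 5)) h5
    refine ⟨b, m, R, hperm, by omega, Or.inr ⟨2, by omega, by omega, ?_⟩⟩
    have e3 : K L = 0 + K R := by
      have h : K L = (if m = 3 then 1 else 0) + K R := cnt_perm _ hperm
      rwa [if_neg (by omega : ¬(m = 3))] at h
    have e4 : C4 L = 0 + C4 R := by
      have h : C4 L = (if m = 4 then 1 else 0) + C4 R := cnt_perm _ hperm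
      rwa [if_neg (by omega : ¬(m = 4))] at h
    have e5 : C5 L = 1 + C5 R := by
      have h : C5 L = (if m = 5 then 1 else 0) + C5 R := cnt_perm _ hperm
      rwa [if_pos (by omega : m = 5)] at h
    have e6 : C6 L = 0 + C6 R := by
      have h : C6 L = (if m = 6 then 1 else 0) + C6 R := cnt_perm _ hperm
      rwa [if_neg (by omega : ¬(m = 6))] at h
    have e7 : C7 L = 0 + C7 R := by
      have h : C7 L = (if m = 7 then 1 else 0) + C7 R := cnt_perm _ hperm
      rwa [if_neg (by omega : ¬(m = 7))] at h
    have e8 : C8 L = 0 + C8 R := by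
      have h : C8 L = (if m = 8 then 1 else 0) + C8 R := cnt_perm _ hperm
      rwa [if_neg (by omega : ¬(m = 8))] at h
    have e9 : RR L = 0 + RR R := by
      have h : RR L = (if 9 ≤ m then 1 else 0) + RR R := cnt_perm _ hperm
      rwa [if_neg (by omega : ¬(9 ≤ m))] at h
    have eT : T L = 1 + T R := by
      have h : T L = (if 4 ≤ m then 1 else 0) + T R := cnt_perm _ hperm
      rwa [if_pos (by omega : 4 ≤ m)] at h
    have hTsR := T_split R
    have hTsL := T_split L
    simp only [PF, PW, K, C4, C5, C6, C7, C8, RR, T, cnt] at *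
    have ja0 := ite_char (2 = 3)
    have ja1 := ite_char (2 = 4)
    have ja2 := ite_char (2 = 5)
    have ja3 := ite_char (2 = 6)
    have ja4 := ite_char (2 = 7)
    have ja5 := ite_char (2 = 8)
    have ja6 := ite_char (9 ≤ 2)
    have ja7 := ite_char (4 ≤ 2)
    have jb0 := ite_char (m - 1 - 2 = 3)
    have jb1 := ite_char (m - 1 - 2 = 4)
    have jb2 := ite_char (m - 1 - 2 = 5)
    have jb3 := ite_char (m - 1 - 2 = 6)
    have jb4 := ite_char (m - 1 - 2 = 7)
    have jb5 := ite_char (m - 1 - 2 = 8)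
    have jb6 := ite_char (9 ≤ m - 1 - 2)
    have jb7 := ite_char (4 ≤ m - 1 - 2)
    omega
  by_cases hr : 0 < RR L
  · obtain ⟨b, m, R, hperm, hP⟩ := pick (P := (9 ≤ ·)) hr
    refine ⟨b, m, R, hperm, by omega, Or.inl ?_⟩
    have e3 : K L = 0 + K R := by
      have h : K L = (if m = 3 then 1 else 0) + K R := cnt_perm _ hperm
      rwa [if_neg (by omega : ¬(m = 3))] at h
    have e4 : C4 L = 0 + C4 R := by
      have h : C4 L = (if m = 4 then 1 else 0) + C4 R := cnt_perm _ hperm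
      rwa [if_neg (by omega : ¬(m = 4))] at h
    have e5 : C5 L = 0 + C5 R := by
      have h : C5 L = (if m = 5 then 1 else 0) + C5 R := cnt_perm _ hperm
      rwa [if_neg (by omega : ¬(m = 5))] at h
    have e6 : C6 L = 0 + C6 R := by
      have h : C6 L = (if m = 6 then 1 else 0) + C6 R := cnt_perm _ hperm
      rwa [if_neg (by omega : ¬(m = 6))] at h
    have e7 : C7 L = 0 + C7 R := by
      have h : C7 L = (if m = 7 then 1 else 0) + C7 R := cnt_perm _ hperm
      rwa [if_neg (by omega : ¬(m = 7))] at h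
    have e8 : C8 L = 0 + C8 R := by
      have h : C8 L = (if m = 8 then 1 else 0) + C8 R := cnt_perm _ hperm
      rwa [if_neg (by omega : ¬(m = 8))] at h
    have e9 : RR L = 1 + RR R := by
      have h : RR L = (if 9 ≤ m then 1 else 0) + RR R := cnt_perm _ hperm
      rwa [if_pos (by omega : 9 ≤ m)] at h
    have eT : T L = 1 + T R := by
      have h : T L = (if 4 ≤ m then 1 else 0) + T R := cnt_perm _ hperm
      rwa [if_pos (by omega : 4 ≤ m)] at h
    have hTsR := T_split R
    have hTsL := T_split L
    simp only [PF, PW, K, C4, C5, C6, C7, C8, RR, T, cnt] at *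
    have ja0 := ite_char (m - 1 = 3)
    have ja1 := ite_char (m - 1 = 4)
    have ja2 := ite_char (m - 1 = 5)
    have ja3 := ite_char (m - 1 = 6)
    have ja4 := ite_char (m - 1 = 7)
    have ja5 := ite_char (m - 1 = 8)
    have ja6 := ite_char (9 ≤ m - 1)
    have ja7 := ite_char (4 ≤ m - 1)
    omega
  by_cases h8' : 0 < C8 L
  · obtain ⟨b, m, R, hperm, hP⟩ := pick (P := (· = 8)) h8'
    refine ⟨b, m, R, hperm, by omega, Or.inl ?_⟩
    have e3 : K L = 0 + K R := by
      have h : K L = (if m = 3 then 1 else 0) + K R := cnt_perm _ hperm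
      rwa [if_neg (by omega : ¬(m = 3))] at h
    have e4 : C4 L = 0 + C4 R := by
      have h : C4 L = (if m = 4 then 1 else 0) + C4 R := cnt_perm _ hperm
      rwa [if_neg (by omega : ¬(m = 4))] at h
    have e5 : C5 L = 0 + C5 R := by
      have h : C5 L = (if m = 5 then 1 else 0) + C5 R := cnt_perm _ hperm
      rwa [if_neg (by omega : ¬(m = 5))] at h
    have e6 : C6 L = 0 + C6 R := by
      have h : C6 L = (if m = 6 then 1 else 0) + C6 R := cnt_perm _ hperm
      rwa [if_neg (by omega : ¬(m = 6))] at h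
    have e7 : C7 L = 0 + C7 R := by
      have h : C7 L = (if m = 7 then 1 else 0) + C7 R := cnt_perm _ hperm
      rwa [if_neg (by omega : ¬(m = 7))] at h
    have e8 : C8 L = 1 + C8 R := by
      have h : C8 L = (if m = 8 then 1 else 0) + C8 R := cnt_perm _ hperm
      rwa [if_pos (by omega : m = 8)] at h
    have e9 : RR L = 0 + RR R := by
      have h : RR L = (if 9 ≤ m then 1 else 0) + RR R := cnt_perm _ hperm
      rwa [if_neg (by omega : ¬(9 ≤ m))] at h
    have eT : T L = 1 + T R := by
      have h : T L = (if 4 ≤ m then 1 else 0) + T R := cnt_perm _ hperm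
      rwa [if_pos (by omega : 4 ≤ m)] at h
    have hTsR := T_split R
    have hTsL := T_split L
    simp only [PF, PW, K, C4, C5, C6, C7, C8, RR, T, cnt] at *
    have ja0 := ite_char (m - 1 = 3)
    have ja1 := ite_char (m - 1 = 4)
    have ja2 := ite_char (m - 1 = 5)
    have ja3 := ite_char (m - 1 = 6)
    have ja4 := ite_char (m - 1 = 7)
    have ja5 := ite_char (m - 1 = 8)
    have ja6 := ite_char (9 ≤ m - 1)
    have ja7 := ite_char (4 ≤ m - 1)
    omega
  by_cases h7' : 0 < C7 L
  · obtain ⟨b, m, R, hperm, hP⟩ := pick (P := (· = 7)) h7'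
    refine ⟨b, m, R, hperm, by omega, Or.inl ?_⟩
    have e3 : K L = 0 + K R := by
      have h : K L = (if m = 3 then 1 else 0) + K R := cnt_perm _ hperm
      rwa [if_neg (by omega : ¬(m = 3))] at h
    have e4 : C4 L = 0 + C4 R := by
      have h : C4 L = (if m = 4 then 1 else 0) + C4 R := cnt_perm _ hperm
      rwa [if_neg (by omega : ¬(m = 4))] at h
    have e5 : C5 L = 0 + C5 R := by
      have h : C5 L = (if m = 5 then 1 else 0) + C5 R := cnt_perm _ hperm
      rwa [if_neg (by omega : ¬(m = 5))] at h
    have e6 : C6 L = 0 + C6 R := by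
      have h : C6 L = (if m = 6 then 1 else 0) + C6 R := cnt_perm _ hperm
      rwa [if_neg (by omega : ¬(m = 6))] at h
    have e7 : C7 L = 1 + C7 R := by
      have h : C7 L = (if m = 7 then 1 else 0) + C7 R := cnt_perm _ hperm
      rwa [if_pos (by omega : m = 7)] at h
    have e8 : C8 L = 0 + C8 R := by
      have h : C8 L = (if m = 8 then 1 else 0) + C8 R := cnt_perm _ hperm
      rwa [if_neg (by omega : ¬(m = 8))] at h
    have e9 : RR L = 0 + RR R := by
      have h : RR L = (if 9 ≤ m then 1 else 0) + RR R := cnt_perm _ hperm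
      rwa [if_neg (by omega : ¬(9 ≤ m))] at h
    have eT : T L = 1 + T R := by
      have h : T L = (if 4 ≤ m then 1 else 0) + T R := cnt_perm _ hperm
      rwa [if_pos (by omega : 4 ≤ m)] at h
    have hTsR := T_split R
    have hTsL := T_split L
    simp only [PF, PW, K, C4, C5, C6, C7, C8, RR, T, cnt] at *
    have ja0 := ite_char (m - 1 = 3)
    have ja1 := ite_char (m - 1 = 4)
    have ja2 := ite_char (m - 1 = 5)
    have ja3 := ite_char (m - 1 = 6)
    have ja4 := ite_char (m - 1 = 7)
    have ja5 := ite_char (m - 1 = 8)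
    have ja6 := ite_char (9 ≤ m - 1)
    have ja7 := ite_char (4 ≤ m - 1)
    omega
  by_cases h6' : 0 < C6 L
  · obtain ⟨b, m, R, hperm, hP⟩ := pick (P := (· = 6)) h6'
    refine ⟨b, m, R, hperm, by omega, Or.inl ?_⟩
    have e3 : K L = 0 + K R := by
      have h : K L = (if m = 3 then 1 else 0) + K R := cnt_perm _ hperm
      rwa [if_neg (by omega : ¬(m = 3))] at h
    have e4 : C4 L = 0 + C4 R := by
      have h : C4 L = (if m = 4 then 1 else 0) + C4 R := cnt_perm _ hperm
      rwa [if_neg (by omega : ¬(m = 4))] at h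
    have e5 : C5 L = 0 + C5 R := by
      have h : C5 L = (if m = 5 then 1 else 0) + C5 R := cnt_perm _ hperm
      rwa [if_neg (by omega : ¬(m = 5))] at h
    have e6 : C6 L = 1 + C6 R := by
      have h : C6 L = (if m = 6 then 1 else 0) + C6 R := cnt_perm _ hperm
      rwa [if_pos (by omega : m = 6)] at h
    have e7 : C7 L = 0 + C7 R := by
      have h : C7 L = (if m = 7 then 1 else 0) + C7 R := cnt_perm _ hperm
      rwa [if_neg (by omega : ¬(m = 7))] at h
    have e8 : C8 L = 0 + C8 R := by
      have h : C8 L = (if m = 8 then 1 else 0) + C8 R := cnt_perm _ hperm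
      rwa [if_neg (by omega : ¬(m = 8))] at h
    have e9 : RR L = 0 + RR R := by
      have h : RR L = (if 9 ≤ m then 1 else 0) + RR R := cnt_perm _ hperm
      rwa [if_neg (by omega : ¬(9 ≤ m))] at h
    have eT : T L = 1 + T R := by
      have h : T L = (if 4 ≤ m then 1 else 0) + T R := cnt_perm _ hperm
      rwa [if_pos (by omega : 4 ≤ m)] at h
    have hTsR := T_split R
    have hTsL := T_split L
    simp only [PF, PW, K, C4, C5, C6, C7, C8, RR, T, cnt] at *
    have ja0 := ite_char (m - 1 = 3)
    have ja1 := ite_char (m - 1 = 4)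
    have ja2 := ite_char (m - 1 = 5)
    have ja3 := ite_char (m - 1 = 6)
    have ja4 := ite_char (m - 1 = 7)
    have ja5 := ite_char (m - 1 = 8)
    have ja6 := ite_char (9 ≤ m - 1)
    have ja7 := ite_char (4 ≤ m - 1)
    omega
  · have h5' : 0 < C5 L := by have := T_split L; omega
    obtain ⟨b, m, R, hperm, hP⟩ := pick (P := (· = 5)) h5'
    refine ⟨b, m, R, hperm, by omega, Or.inl ?_⟩
    have e3 : K L = 0 + K R := by
      have h : K L = (if m = 3 then 1 else 0) + K R := cnt_perm _ hperm
      rwa [if_neg (by omega : ¬(m = 3))] at h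
    have e4 : C4 L = 0 + C4 R := by
      have h : C4 L = (if m = 4 then 1 else 0) + C4 R := cnt_perm _ hperm
      rwa [if_neg (by omega : ¬(m = 4))] at h
    have e5 : C5 L = 1 + C5 R := by
      have h : C5 L = (if m = 5 then 1 else 0) + C5 R := cnt_perm _ hperm
      rwa [if_pos (by omega : m = 5)] at h
    have e6 : C6 L = 0 + C6 R := by
      have h : C6 L = (if m = 6 then 1 else 0) + C6 R := cnt_perm _ hperm
      rwa [if_neg (by omega : ¬(m = 6))] at h
    have e7 : C7 L = 0 + C7 R := by
      have h : C7 L = (if m = 7 then 1 else 0) + C7 R := cnt_perm _ hperm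
      rwa [if_neg (by omega : ¬(m = 7))] at h
    have e8 : C8 L = 0 + C8 R := by
      have h : C8 L = (if m = 8 then 1 else 0) + C8 R := cnt_perm _ hperm
      rwa [if_neg (by omega : ¬(m = 8))] at h
    have e9 : RR L = 0 + RR R := by
      have h : RR L = (if 9 ≤ m then 1 else 0) + RR R := cnt_perm _ hperm
      rwa [if_neg (by omega : ¬(9 ≤ m))] at h
    have eT : T L = 1 + T R := by
      have h : T L = (if 4 ≤ m then 1 else 0) + T R := cnt_perm _ hperm
      rwa [if_pos (by omega : 4 ≤ m)] at h
    have hTsR := T_split R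
    have hTsL := T_split L
    simp only [PF, PW, K, C4, C5, C6, C7, C8, RR, T, cnt] at *
    have ja0 := ite_char (m - 1 = 3)
    have ja1 := ite_char (m - 1 = 4)
    have ja2 := ite_char (m - 1 = 5)
    have ja3 := ite_char (m - 1 = 6)
    have ja4 := ite_char (m - 1 = 7)
    have ja5 := ite_char (m - 1 = 8)
    have ja6 := ite_char (9 ≤ m - 1)
    have ja7 := ite_char (4 ≤ m - 1)
    omega


theorem key : ∀ (N : ℕ) (L : List Seg), Sep L → mu L ≤ N →
    (PF L → 0 ⧏ mfG (listV L) (listE L)) ∧ (PW L → 0 ≤ mfG (listV L) (listE L)) := by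
  intro N
  induction N with
  | zero =>
    intro L hSep hmu
    have hL : L = [] := by
      cases L with
      | nil => rfl
      | cons s R =>
        exfalso
        have := hSep.1 s (List.mem_cons_self)
        have h2 : mu (s :: R) = (2 * s.2 - 1) + mu R := rfl
        omega
    subst hL
    constructor
    · intro hPF
      exfalso
      have h1 := hPF.1
      simp only [T, cnt] at h1
      omega
    · intro _
      rw [mfG, zero_le_lf]
      intro j
      exact absurd j.2.1.1 (by simp [listE])
  | succ N IH =>
    intro L hSep hmu
    constructor
    · intro hPF
      obtain ⟨b, m, R, hperm, h3m, hmv⟩ := closure1 hPF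
      have hSep' : Sep ((b, m) :: R) := Sep_perm hperm hSep
      have hV : listV L = listV ((b, m) :: R) := listV_perm hperm
      have hE : listE L = listE ((b, m) :: R) := listE_perm hperm
      have hmuL : mu ((b, m) :: R) = mu L := (mu_perm hperm).symm
      have hmuc : mu ((b, m) :: R) = (2 * m - 1) + mu R := rfl
      obtain ⟨⟨b', m'⟩, hbig, h4b⟩ := cnt_pos (show 0 < cnt (4 ≤ ·) L from hPF.1)
      have hROK := rightOK_mid hSep hbig h4b
      rw [hV, hE] at hROK ⊢
      rw [mfG, zero_lf_le]
      rcases hmv with hdec | ⟨p, hp2, hp3, hPW⟩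
      · refine ⟨⟨b, leftOK_dec hSep' (by omega), ⟨_, hROK⟩⟩, ?_⟩
        simp only [PGame.moveLeft_mk]
        rw [effV_dec hSep' (by omega), effE_dec hSep' (by omega)]
        refine (IH _ ?_ ?_).2 hdec
        · refine sep_sub_head (s' := (b+1, m-1)) hSep' ?_ (segV_sub (by omega) ?_)
          · show 2 ≤ m - 1; omega
          · show b + 1 + (m - 1) ≤ b + m; omega
        · have h2 : mu ((b+1, m-1) :: R) = (2 * (m-1) - 1) + mu R := rfl
          omega
      · refine ⟨⟨b + p, leftOK_split hSep' hp2 hp3, ⟨_, hROK⟩⟩, ?_⟩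
        simp only [PGame.moveLeft_mk]
        rw [effV_split hSep' hp2 hp3, effE_split hSep' hp2 hp3]
        refine (IH _ ?_ ?_).2 hPW
        · refine sep_sub_head2 (s1 := (b, p)) (s2 := (b+p+1, m-1-p)) hSep' ?_ ?_
            (segV_sub (le_refl b) ?_) (segV_sub ?_ ?_) ?_
          · show 2 ≤ p; omega
          · show 2 ≤ m - 1 - p; omega
          · show b + p ≤ b + m; omega
          · show b ≤ b + p + 1; omega
          · show b + p + 1 + (m - 1 - p) ≤ b + m; omega
          · rw [Finset.disjoint_left]
            intro a ha hb
            rw [mem_segV'] at ha hb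
            omega
        · have h2 : mu ((b, p) :: (b+p+1, m-1-p) :: R) = (2 * p - 1) + ((2 * (m-1-p) - 1) + mu R) := rfl
          omega
    · intro hPW
      rw [mfG, zero_le_lf]
      intro j
      simp only [PGame.moveRight_mk]
      obtain ⟨b, m, p, hbm, hp2, hpm, he⟩ := rightMove_char hSep j.2.1
      obtain ⟨R, hperm⟩ : ∃ R, L.Perm ((b, m) :: R) := ⟨_, List.perm_cons_erase hbm⟩
      have hSep' : Sep ((b, m) :: R) := Sep_perm hperm hSep
      have hV : listV L = listV ((b, m) :: R) := listV_perm hperm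
      have hE : listE L = listE ((b, m) :: R) := listE_perm hperm
      have hmuL : mu ((b, m) :: R) = mu L := (mu_perm hperm).symm
      have hmuc : mu ((b, m) :: R) = (2 * m - 1) + mu (R) := rfl
      rw [he, hV, effV_cut hp2 hpm, hE, effE_cut hSep' hp2 hpm]
      refine (IH _ (sep_cut hSep' hp2 hpm) ?_).1
        (closure2 (PW_perm hperm hPW) hp2 (by omega) (by omega))
      have h2 : mu ((b, p) :: (b+p, m-p) :: R) = (2 * p - 1) + ((2 * (m-p) - 1) + mu (R)) := rfl
      omega

/-- For every `n ≥ 9`, Left wins the Mutual Failures Variant on the path `P_n`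
regardless of which player moves first, i.e. `P_n > 0`. -/
theorem mf_path_left_wins : ∀ n : ℕ, 9 ≤ n → 0 < mfPath n := by
  intro n hn
  have hV : Finset.range n = listV [(0, n)] := by
    ext v
    rw [Finset.mem_range, show listV [(0, n)] = segV (0, n) ∪ ∅ from rfl,
      Finset.union_empty, mem_segV']
    omega
  have hE : pathE n = listE [(0, n)] := by
    rw [show listE [(0, n)] = segE (0, n) ∪ ∅ from rfl, Finset.union_empty]
    ext e
    simp only [pathE, Finset.mem_image, Finset.mem_range, mem_segE']
    constructor
    · rintro ⟨i, hi, rfl⟩; exact ⟨i, ⟨by omega, by omega⟩, rfl⟩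
    · rintro ⟨i, ⟨h1, h2⟩, rfl⟩; exact ⟨i, by omega, rfl⟩
  have hSep : Sep [(0, n)] := by
    constructor
    · intro s hs
      have := List.mem_singleton.mp hs
      subst this
      show 2 ≤ n; omega
    · exact List.pairwise_singleton _ _
  have hPF : PF [(0, n)] := by
    simp only [PF, K, C4, T, cnt]
    have i1 := ite_char (n = 3); have i2 := ite_char (n = 4); have i3 := ite_char (4 ≤ n)
    omega
  have hPW : PW [(0, n)] := by
    simp only [PW, K, C4, C5, C6, C8, T, cnt]
    have i1 := ite_char (n = 3); have i2 := ite_char (n = 4); have i3 := ite_char (n = 5)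
    have i4 := ite_char (n = 6); have i5 := ite_char (n = 8); have i6 := ite_char (4 ≤ n)
    omega
  have hkey := key (mu [(0, n)]) [(0, n)] hSep (le_refl _)
  rw [lt_iff_le_and_lf]
  constructor
  · show 0 ≤ mfG (Finset.range n) (pathE n)
    rw [hV, hE]
    exact hkey.2 hPW
  · show 0 ⧏ mfG (Finset.range n) (pathE n)
    rw [hV, hE]
    exact hkey.1 hPF

end MixedDeletion
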